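/- Let G be a graph and ℋ=(L,H) a full m-fold cover of G. For any connected subgraph G₀ of G, the number of transversals of {L(v): v ∈ V(G₀)} inducing a copy of G₀ in H is at most m, with equality if every non-bridge edge of G₀ is horizontal with respect to ℋ. -/

import Mathlib

open SimpleGraph

attribute [local instance] Classical.propDecidable

universe u
variable {V : Type u}

/-- `H` (on vertex set `V × Fin m`) is an `m`-fold cover of `G`. -/
def IsCover (G : SimpleGraph V) (m : ℕ) (H : SimpleGraph (V × Fin m)) : Prop :=
  (∀ (u : V) (i j : Fin m), i ≠ j → H.Adj (u, i) (u, j)) ∧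
  (∀ (u v : V) (i j : Fin m), u ≠ v → H.Adj (u, i) (v, j) → G.Adj u v) ∧
  (∀ (u v : V) (i j j' : Fin m), u ≠ v → H.Adj (u, i) (v, j) → H.Adj (u, i) (v, j') → j = j')

/-- A full cover: every matching between fibers over an edge is perfect. -/
def IsFullCover (G : SimpleGraph V) (m : ℕ) (H : SimpleGraph (V × Fin m)) : Prop :=
  IsCover G m H ∧ ∀ u v : V, G.Adj u v → ∀ i : Fin m, ∃ j : Fin m, H.Adj (u, i) (v, j)

/-- Number of ℋ-colorings (independent transversals) of a cover graph `H`. -/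
noncomputable def coverCount {m : ℕ} (H : SimpleGraph (V × Fin m)) : ℕ :=
  Nat.card {f : V → Fin m // ∀ u v : V, ¬ H.Adj (u, f u) (v, f v)}

/-- The DP color function. -/
noncomputable def PDP (G : SimpleGraph V) (m : ℕ) : ℕ :=
  sInf {n | ∃ H : SimpleGraph (V × Fin m), IsCover G m H ∧ n = coverCount H}

/-- Number of proper m-colorings, i.e. the chromatic polynomial evaluated at m. -/
noncomputable def properCount (G : SimpleGraph V) (m : ℕ) : ℕ :=
  Nat.card {f : V → Fin m // ∀ u v : V, G.Adj u v → f u ≠ f v}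

/-- Girth of an edge: length of a shortest cycle through `e` (∞ if none). -/
noncomputable def edgeGirth (G : SimpleGraph V) (e : Sym2 V) : ℕ∞ :=
  ⨅ (a : V) (p : G.Walk a a) (_ : p.IsCycle) (_ : e ∈ p.edges), (p.length : ℕ∞)

/-- Girth of an edge set `E₀`: length of a shortest cycle meeting `E₀` in an odd
number of edges (∞ if none). -/
noncomputable def setGirth (G : SimpleGraph V) (E₀ : Set (Sym2 V)) : ℕ∞ :=
  ⨅ (a : V) (p : G.Walk a a) (_ : p.IsCycle)
    (_ : Odd (p.edges.countP (fun e => e ∈ E₀))), (p.length : ℕ∞)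

/-- The canonical cover graph `H_{G,m}`. -/
def canonicalCover (G : SimpleGraph V) (m : ℕ) : SimpleGraph (V × Fin m) where
  Adj x y := (x.1 = y.1 ∧ x.2 ≠ y.2) ∨ (G.Adj x.1 y.1 ∧ x.2 = y.2)
  symm := by
    constructor
    rintro ⟨u, i⟩ ⟨v, j⟩ (⟨h1, h2⟩ | ⟨h1, h2⟩)
    · exact Or.inl ⟨h1.symm, h2.symm⟩
    · exact Or.inr ⟨h1.symm, h2.symm⟩
  loopless := by constructor; rintro ⟨u, i⟩ (⟨h1, h2⟩ | ⟨h1, h2⟩) <;> simp_all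

/-- `D` is an orientation of the edge set `E₀`. -/
def IsOrientation (D : Set (V × V)) (E₀ : Set (Sym2 V)) : Prop :=
  (∀ x ∈ D, s(x.1, x.2) ∈ E₀) ∧
  ∀ u v : V, s(u, v) ∈ E₀ → ((u, v) ∈ D ↔ (v, u) ∉ D)

/-- The directed edges `D` are balanced on the closed walk `p`. -/
noncomputable def BalancedOn {G : SimpleGraph V} (D : Set (V × V)) {a : V}
    (p : G.Walk a a) : Prop :=
  p.darts.countP (fun d => (d.fst, d.snd) ∈ D) =
    p.darts.countP (fun d => (d.snd, d.fst) ∈ D)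

/-- A DP-good graph. -/
def DPGood [Fintype V] (G : SimpleGraph V) : Prop :=
  G.Connected ∧
  ∃ T : SimpleGraph V, T ≤ G ∧ T.IsTree ∧
    ∃ (q : ℕ) (e : Fin q → Sym2 V),
      Function.Injective e ∧
      Set.range e = G.edgeSet \ T.edgeSet ∧
      (∀ i j : Fin q, i ≤ j → edgeGirth G (e i) ≤ edgeGirth G (e j)) ∧
      ∀ i : Fin q, ∃ g : ℕ, Odd g ∧ edgeGirth G (e i) = (g : ℕ∞) ∧
        ∃ (a : V) (C : G.Walk a a), C.IsCycle ∧ e i ∈ C.edges ∧ C.length = g ∧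
          ∀ f ∈ C.edges, f ∈ T.edgeSet ∪ {e j | j ≤ i}


/-- An edge `uv` of `G` is horizontal with respect to the cover `H`. -/
def IsHorizontal {V : Type} {m : ℕ} (H : SimpleGraph (V × Fin m)) (u v : V) : Prop :=
  ∀ i j : Fin m, H.Adj (u, i) (v, j) ↔ i = j

private lemma reach_delete {α : Type*} {W : SimpleGraph α} {a b x y : α}
    (h : W.Reachable x y) :
    (W.deleteEdges {s(a,b)}).Reachable x y ∨
    ((W.deleteEdges {s(a,b)}).Reachable x a ∧ (W.deleteEdges {s(a,b)}).Reachable b y) ∨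
    ((W.deleteEdges {s(a,b)}).Reachable x b ∧ (W.deleteEdges {s(a,b)}).Reachable a y) := by
  obtain ⟨p⟩ := h
  induction p with
  | nil => exact Or.inl (Reachable.refl _)
  | @cons x c y hxc p ih =>
    by_cases he : s(x, c) = s(a, b)
    · rcases Sym2.eq_iff.mp he with ⟨rfl, rfl⟩ | ⟨rfl, rfl⟩
      · rcases ih with r | ⟨r1, r2⟩ | ⟨r1, r2⟩
        · exact Or.inr (Or.inl ⟨Reachable.refl _, r⟩)
        · exact Or.inl (r1.symm.trans r2)
        · exact Or.inl r2
      · rcases ih with r | ⟨r1, r2⟩ | ⟨r1, r2⟩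
        · exact Or.inr (Or.inr ⟨Reachable.refl _, r⟩)
        · exact Or.inl r2
        · exact Or.inl (r1.symm.trans r2)
    · have step : (W.deleteEdges {s(a,b)}).Reachable x c :=
        (SimpleGraph.deleteEdges_adj.mpr ⟨hxc, by simpa using he⟩).reachable
      rcases ih with r | ⟨r1, r2⟩ | ⟨r1, r2⟩
      · exact Or.inl (step.trans r)
      · exact Or.inr (Or.inl ⟨step.trans r1, r2⟩)
      · exact Or.inr (Or.inr ⟨step.trans r1, r2⟩)

private lemma exists_transversal {α : Type*} [Finite α] {m : ℕ}
    (P : α → α → Fin m → Fin m → Prop)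
    (hsym : ∀ u v i j, P u v i j → P v u j i) :
    ∀ (n : ℕ) (W : SimpleGraph α), W.edgeSet.ncard ≤ n →
    (∀ u v, W.Adj u v → ∀ i : Fin m, ∃ j, P u v i j) →
    (∀ u v, W.Adj u v → ¬ W.IsBridge s(u,v) → ∀ i j, (P u v i j ↔ i = j)) →
    ∀ (v₀ : α) (i : Fin m), ∃ f : α → Fin m, f v₀ = i ∧
      ∀ u v, W.Adj u v → W.Reachable v₀ u → P u v (f u) (f v) := by
  intro n
  induction n with
  | zero =>
    intro W hcard hex hhor v₀ i
    refine ⟨fun _ => i, rfl, fun u v huv _ => ?_⟩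
    have hempty : W.edgeSet = ∅ :=
      (Set.ncard_eq_zero (Set.toFinite _)).mp (Nat.le_zero.mp hcard)
    have hmem : s(u, v) ∈ W.edgeSet := (SimpleGraph.mem_edgeSet (G := W)).mpr huv
    rw [hempty] at hmem
    exact hmem.elim
  | succ n ih =>
    intro W hcard hex hhor v₀ i
    by_cases hall : ∀ u v, W.Adj u v → W.Reachable v₀ u → ∀ j k, P u v j k ↔ j = k
    · exact ⟨fun _ => i, rfl, fun u v huv hr => (hall u v huv hr i i).mpr rfl⟩
    push_neg at hall
    obtain ⟨a, b, hab, hra, hnh⟩ := hall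
    have hbr : W.IsBridge s(a, b) := by
      by_contra h
      obtain ⟨j, k, hjk⟩ := hnh
      rcases hjk with ⟨hp, hne⟩ | ⟨hnp, heq⟩
      · exact hne ((hhor a b hab h j k).mp hp)
      · exact hnp ((hhor a b hab h j k).mpr heq)
    have hle : W.deleteEdges {s(a,b)} ≤ W := SimpleGraph.deleteEdges_le _
    have hcard' : (W.deleteEdges {s(a,b)}).edgeSet.ncard ≤ n := by
      rw [SimpleGraph.edgeSet_deleteEdges]
      have := Set.ncard_diff_singleton_lt_of_mem ((SimpleGraph.mem_edgeSet (G := W)).mpr hab)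
        (Set.toFinite W.edgeSet)
      omega
    have hex' : ∀ u v, (W.deleteEdges {s(a,b)}).Adj u v → ∀ i : Fin m, ∃ j, P u v i j :=
      fun u v huv i => hex u v (hle huv) i
    have hhor' : ∀ u v, (W.deleteEdges {s(a,b)}).Adj u v →
        ¬ (W.deleteEdges {s(a,b)}).IsBridge s(u,v) → ∀ i j, (P u v i j ↔ i = j) := by
      intro u v huv hnb
      refine hhor u v (hle huv) ?_
      rw [SimpleGraph.isBridge_iff_adj_and_forall_cycle_notMem huv] at hnb
      rw [SimpleGraph.isBridge_iff_adj_and_forall_cycle_notMem (hle huv)]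
      push_neg at hnb
      obtain ⟨w, p, hp, hmem⟩ := hnb
      rintro hcyc
      refine hcyc (p.mapLe hle) (hp.mapLe hle) ?_
      simpa [SimpleGraph.Walk.edges_mapLe_eq_edges] using hmem
    have hnrab : ¬ (W.deleteEdges {s(a,b)}).Reachable a b :=
      (SimpleGraph.isBridge_iff).mp hbr
    have main : ∀ c d : α, W.Adj c d → s(c,d) = s(a,b) →
        (W.deleteEdges {s(a,b)}).Reachable v₀ c →
        ∃ f : α → Fin m, f v₀ = i ∧
          ∀ u v, W.Adj u v → W.Reachable v₀ u → P u v (f u) (f v) := by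
      intro c d hcd hecd hrc
      have hnrcd : ¬ (W.deleteEdges {s(a,b)}).Reachable c d := by
        rcases Sym2.eq_iff.mp hecd with ⟨rfl, rfl⟩ | ⟨rfl, rfl⟩
        · exact hnrab
        · exact fun h => hnrab h.symm
      obtain ⟨f₁, hf₁v₀, hf₁⟩ := ih (W.deleteEdges {s(a,b)}) hcard' hex' hhor' v₀ i
      obtain ⟨j, hj⟩ := hex c d hcd (f₁ c)
      obtain ⟨f₂, hf₂d, hf₂⟩ := ih (W.deleteEdges {s(a,b)}) hcard' hex' hhor' d j
      have hnrv₀d : ¬ (W.deleteEdges {s(a,b)}).Reachable v₀ d :=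
        fun h => hnrcd (hrc.symm.trans h)
      refine ⟨fun x => if (W.deleteEdges {s(a,b)}).Reachable v₀ x then f₁ x else f₂ x,
        ?_, ?_⟩
      · show (if (W.deleteEdges {s(a,b)}).Reachable v₀ v₀ then f₁ v₀ else f₂ v₀) = i
        rw [if_pos (Reachable.refl _), hf₁v₀]
      intro u v huv hru
      show P u v (if (W.deleteEdges {s(a,b)}).Reachable v₀ u then f₁ u else f₂ u)
        (if (W.deleteEdges {s(a,b)}).Reachable v₀ v then f₁ v else f₂ v)
      by_cases he : s(u,v) = s(a,b)
      · have heq : s(u,v) = s(c,d) := he.trans hecd.symm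
        rcases Sym2.eq_iff.mp heq with ⟨rfl, rfl⟩ | ⟨rfl, rfl⟩
        · simp only [if_pos hrc, if_neg hnrv₀d, hf₂d]
          exact hj
        · simp only [if_neg hnrv₀d, if_pos hrc, hf₂d]
          exact hsym _ _ _ _ hj
      · have huv' : (W.deleteEdges {s(a,b)}).Adj u v :=
          SimpleGraph.deleteEdges_adj.mpr ⟨huv, by simpa using he⟩
        by_cases hr : (W.deleteEdges {s(a,b)}).Reachable v₀ u
        · rw [if_pos hr, if_pos (hr.trans huv'.reachable)]
          exact hf₁ u v huv' hr
        · have hrdu : (W.deleteEdges {s(a,b)}).Reachable d u := by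
            rcases reach_delete (a := a) (b := b) hru with h | ⟨h1, h2⟩ | ⟨h1, h2⟩
            · exact absurd h hr
            · rcases Sym2.eq_iff.mp hecd with ⟨rfl, rfl⟩ | ⟨rfl, rfl⟩
              · exact h2
              · exact absurd h1 hnrv₀d
            · rcases Sym2.eq_iff.mp hecd with ⟨rfl, rfl⟩ | ⟨rfl, rfl⟩
              · exact absurd h1 hnrv₀d
              · exact h2
          have hrvn : ¬ (W.deleteEdges {s(a,b)}).Reachable v₀ v :=
            fun h => hr (h.trans huv'.symm.reachable)
          rw [if_neg hr, if_neg hrvn]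
          exact hf₂ u v huv' hrdu
    rcases (by
      rcases reach_delete (a := a) (b := b) hra with h | ⟨h1, _⟩ | ⟨h1, _⟩
      · exact Or.inl h
      · exact Or.inl h1
      · exact Or.inr h1 :
        (W.deleteEdges {s(a,b)}).Reachable v₀ a ∨ (W.deleteEdges {s(a,b)}).Reachable v₀ b)
      with h | h
    · exact main a b hab rfl h
    · exact main b a hab.symm (Sym2.eq_swap) h

/-- for a connected subgraph `G₀` of `G`, the number of transversals
inducing a copy of `G₀` is at most `m`, with equality if every non-bridge edge of `G₀`
is horizontal. -/
theorem card_copies_le_m {V : Type} [Fintype V] [DecidableEq V]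
    (G : SimpleGraph V) (m : ℕ) (H : SimpleGraph (V × Fin m))
    (hH : IsFullCover G m H) (G' : G.Subgraph) (hconn : G'.Connected) :
    Nat.card {f : G'.verts → Fin m // ∀ u v : G'.verts,
        G'.Adj u.1 v.1 → H.Adj (u.1, f u) (v.1, f v)} ≤ m ∧
    ((∀ u v : G'.verts, G'.coe.Adj u v → ¬ G'.coe.IsBridge s(u, v) →
        IsHorizontal H u.1 v.1) →
      Nat.card {f : G'.verts → Fin m // ∀ u v : G'.verts,
        G'.Adj u.1 v.1 → H.Adj (u.1, f u) (v.1, f v)} = m) := by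
  classical
  obtain ⟨⟨hc1, hc2, hc3⟩, hfull⟩ := hH
  obtain ⟨v₀, hv₀⟩ := hconn.nonempty
  have hpre : ∀ u v : G'.verts, G'.coe.Reachable u v := fun u v => hconn.coe.preconnected u v
  set S := {f : G'.verts → Fin m // ∀ u v : G'.verts,
      G'.Adj u.1 v.1 → H.Adj (u.1, f u) (v.1, f v)} with hS
  have hinj : Function.Injective (fun s : S => s.1 ⟨v₀, hv₀⟩) := by
    rintro ⟨f, hf⟩ ⟨g, hg⟩ h
    simp only at h
    have key : ∀ (x y : G'.verts) (p : G'.coe.Walk x y), f x = g x → f y = g y := by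
      intro x y p
      induction p with
      | nil => exact id
      | cons hxz q ihq =>
        rename_i x z y
        intro hx
        apply ihq
        have hadj : G'.Adj x.1 z.1 := hxz
        have hne : x.1 ≠ z.1 := (G'.adj_sub hadj).ne
        have h1 := hf x z hadj
        have h2 := hg x z hadj
        rw [← hx] at h2
        exact hc3 x.1 z.1 (f x) (f z) (g z) hne h1 h2
    refine Subtype.ext (funext fun v => key _ v (hpre ⟨v₀, hv₀⟩ v).some h)
  constructor
  · calc Nat.card S ≤ Nat.card (Fin m) := Nat.card_le_card_of_injective _ hinj
    _ = m := by simp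
  · intro hhoriz
    have hsurj : Function.Surjective (fun s : S => s.1 ⟨v₀, hv₀⟩) := by
      intro i
      obtain ⟨f, hfv₀, hf⟩ := exists_transversal
        (fun (u v : G'.verts) (i j : Fin m) => H.Adj (u.1, i) (v.1, j))
        (fun u v i j h => h.symm) (G'.coe.edgeSet.ncard) G'.coe le_rfl
        (fun u v huv i => hfull u.1 v.1 (G'.adj_sub huv) i)
        (fun u v huv hnb => hhoriz u v huv hnb) ⟨v₀, hv₀⟩ i
      exact ⟨⟨f, fun u v huv => hf u v huv (hpre ⟨v₀, hv₀⟩ u)⟩, hfv₀⟩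
    calc Nat.card S = Nat.card (Fin m) :=
      Nat.card_eq_of_bijective _ ⟨hinj, hsurj⟩
    _ = m := by simp
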